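/- Let {g_N} be a sequence of nondecreasing right-continuous functions from ℝ≥0 to ℝ≥0 with g_N(0) ≥ 0, converging locally uniformly to a continuous nondecreasing function g. Let f : ℝ≥0 → ℝ be bounded, measurable, and such that its set of discontinuity points has Lebesgue–Stieltjes g-measure zero. Then for every T > 0, ∫_{[0,T]} f dg_N → ∫_{[0,T]} f dg as N → ∞, where the integrals are Lebesgue–Stieltjes integrals. -/

import Mathlib

open MeasureTheory Filter
open Set

noncomputable def sinv (h : ℝ → ℝ) (u : ℝ) : ℝ := sInf {x | u ≤ h x}

section aux

variable (h : StieltjesFunction ℝ) (h0 : ∀ x, x < 0 → h x = 0)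
include h0

lemma sinv_bddBelow {u : ℝ} (hu : 0 < u) : BddBelow {x : ℝ | u ≤ h x} := by
  refine ⟨0, fun x hx => ?_⟩
  by_contra hc
  push_neg at hc
  have := h0 x hc
  simp only [mem_setOf_eq, this] at hx
  linarith

lemma sinv_le_iff {u x T : ℝ} (hu : 0 < u) (huT : u ≤ h T) :
    sinv h u ≤ x ↔ u ≤ h x := by
  constructor
  · intro hle
    have hne : {y : ℝ | u ≤ h y}.Nonempty := ⟨T, huT⟩
    have key : ∀ y, x < y → u ≤ h y := by
      intro y hy
      obtain ⟨s, hs, hsy⟩ := exists_lt_of_csInf_lt hne (lt_of_le_of_lt hle hy)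
      exact le_trans hs (h.mono hsy.le)
    have hrc : ContinuousWithinAt h (Ioi x) x :=
      (h.right_continuous x).mono Ioi_subset_Ici_self
    have : ∀ᶠ y in nhdsWithin x (Ioi x), u ≤ h y :=
      eventually_nhdsWithin_of_forall (fun y hy => key y hy)
    exact ge_of_tendsto hrc this
  · intro hx
    exact csInf_le (sinv_bddBelow h h0 hu) hx

lemma sinv_monotoneOn (T : ℝ) : MonotoneOn (sinv h) (Ioc 0 (h T)) := by
  intro u hu v hv huv
  exact csInf_le_csInf (sinv_bddBelow h h0 hu.1) ⟨T, hv.2⟩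
    (fun x hx => le_trans huv hx)

lemma sinv_aemeasurable (T : ℝ) :
    AEMeasurable (sinv h) (volume.restrict (Ioc 0 (h T))) :=
  aemeasurable_restrict_of_monotoneOn measurableSet_Ioc (sinv_monotoneOn h h0 T)

lemma leftLim_zero : Function.leftLim (h : ℝ → ℝ) 0 = 0 := by
  have hne : nhdsWithin (0:ℝ) (Iio 0) ≠ ⊥ := (nhdsLT_neBot (0:ℝ)).ne
  have hev : ∀ᶠ x in nhdsWithin (0:ℝ) (Iio 0), (h : ℝ → ℝ) x = 0 :=
      eventually_nhdsWithin_of_forall (fun x hx => h0 x hx)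
  exact leftLim_eq_of_tendsto (Tendsto.congr' (Filter.EventuallyEq.symm hev) tendsto_const_nhds)

lemma h_nonneg (x : ℝ) : 0 ≤ h x := by
  rcases lt_or_ge x 0 with hx | hx
  · rw [h0 x hx]
  · calc (0:ℝ) = h (-1) := (h0 (-1) (by norm_num)).symm
    _ ≤ h x := h.mono (by linarith)

lemma map_sinv (T : ℝ) (hT : 0 ≤ T) :
    Measure.map (sinv h) (volume.restrict (Ioc 0 (h T))) = h.measure.restrict (Icc 0 T) := by
  have hc0 : 0 ≤ h T := h_nonneg h h0 T
  have hmeas := sinv_aemeasurable h h0 T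
  have hfin : IsFiniteMeasure (Measure.map (sinv h) (volume.restrict (Ioc 0 (h T)))) := by
    constructor
    rw [Measure.map_apply_of_aemeasurable hmeas MeasurableSet.univ]
    simp only [Set.preimage_univ]
    calc (volume.restrict (Ioc 0 (h T))) univ ≤ volume (Ioc 0 (h T)) := by
          rw [Measure.restrict_apply_univ]
    _ < ⊤ := measure_Ioc_lt_top
  refine @MeasureTheory.Measure.ext_of_Iic ℝ _ _ _ _ _ _ _ _ hfin ?_
  intro x
  rw [Measure.map_apply_of_aemeasurable hmeas measurableSet_Iic,
    Measure.restrict_apply' measurableSet_Ioc,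
    Measure.restrict_apply' (measurableSet_Icc)]
  have hset : sinv h ⁻¹' Iic x ∩ Ioc 0 (h T) = Ioc 0 (min (h x) (h T)) := by
    ext u
    simp only [mem_inter_iff, mem_preimage, mem_Iic, mem_Ioc, lt_min_iff, le_min_iff]
    constructor
    · rintro ⟨hux, hu0, huT⟩
      exact ⟨hu0, (sinv_le_iff h h0 hu0 huT).1 hux, huT⟩
    · rintro ⟨hu0, hux, huT⟩
      exact ⟨(sinv_le_iff h h0 hu0 huT).2 hux, hu0, huT⟩
  rw [hset, Real.volume_Ioc]
  rcases lt_or_ge x 0 with hx | hx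
  · have h1 : Iic x ∩ Icc 0 T = ∅ := by
      ext y; simp only [mem_inter_iff, mem_Iic, mem_Icc, mem_empty_iff_false, iff_false]
      rintro ⟨h1, h2, _⟩; linarith
    rw [h1, measure_empty, h0 x hx]
    simp [min_eq_left hc0]
  · have h1 : Iic x ∩ Icc 0 T = Icc 0 (min x T) := by
      ext y
      simp only [mem_inter_iff, mem_Iic, mem_Icc, le_min_iff]
      constructor
      · rintro ⟨h1, h2, h3⟩; exact ⟨h2, h1, h3⟩
      · rintro ⟨h1, h2, h3⟩; exact ⟨h2, h1, h3⟩
    rw [h1, h.measure_Icc, leftLim_zero h h0, h.mono.map_min, sub_zero]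

end aux

section conv

lemma tlu_pt {F : ℕ → ℝ → ℝ} {G : ℝ → ℝ}
    (hconv : TendstoLocallyUniformlyOn F G atTop (Ici 0)) {x : ℝ} (hx : 0 ≤ x) :
    Tendsto (fun N => F N x) atTop (nhds (G x)) := by
  rw [tendstoLocallyUniformlyOn_iff_forall_tendsto] at hconv
  have key := hconv x hx
  have hcomp : Tendsto (fun N : ℕ => ((N, x) : ℕ × ℝ)) atTop
      (atTop ×ˢ nhdsWithin x (Ici 0)) :=
    Tendsto.prodMk tendsto_id (tendsto_const_pure.mono_right (pure_le_nhdsWithin hx))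
  exact Uniform.tendsto_nhds_right.2 (key.comp hcomp)

lemma sinv_tendsto (gN : ℕ → StieltjesFunction ℝ) (g : StieltjesFunction ℝ)
    (hgN_neg : ∀ N x, x < 0 → gN N x = 0)
    (hg_cont : Continuous g) (hg_neg : ∀ x, x < 0 → g x = 0)
    (hconv : TendstoLocallyUniformlyOn (fun N x => gN N x) (fun x => g x) atTop (Ici 0))
    {T u : ℝ} (hu0 : 0 < u) (huc : u < g T)
    (hgood : ∀ q : ℚ, g (q : ℝ) ≠ u) :
    Tendsto (fun N => sinv (gN N) u) atTop (nhds (sinv g u)) := by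
  set S : Set ℝ := {x | u ≤ g x} with hS
  have hSne : S.Nonempty := ⟨T, huc.le⟩
  have hSbd : BddBelow S := sinv_bddBelow g hg_neg hu0
  have hScl : IsClosed S := isClosed_le continuous_const hg_cont
  set x₀ : ℝ := sinv g u with hx₀def
  have hxS : x₀ ∈ S := hScl.csInf_mem hSne hSbd
  have hx0 : (0:ℝ) ≤ x₀ := by
    refine le_csInf hSne (fun b hb => ?_)
    by_contra hc
    push_neg at hc
    have := hg_neg b hc
    simp only [hS, mem_setOf_eq, this] at hb
    linarith
  have hlt : ∀ x, x < x₀ → g x < u := by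
    intro x hx
    by_contra hge
    push_neg at hge
    exact absurd (csInf_le hSbd hge) (not_le.2 hx)
  have main : ∀ ε > (0:ℝ), ∀ᶠ N in atTop, |sinv (gN N) u - x₀| ≤ ε := by
    intro ε hε
    have hup : u < g (x₀ + ε) := by
      rcases lt_or_eq_of_le (le_trans hxS (g.mono (show x₀ ≤ x₀ + ε by linarith))) with hlt' | heq
      · exact hlt'
      · exfalso
        obtain ⟨q, hq1, hq2⟩ := exists_rat_btwn (show x₀ < x₀ + ε by linarith)
        have h1 : u ≤ g q := le_trans hxS (g.mono hq1.le)
        have h2 : g q ≤ u := heq ▸ g.mono hq2.le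
        exact hgood q (le_antisymm h2 h1)
    have hev1 : ∀ᶠ N in atTop, u < gN N (x₀ + ε) :=
      (tlu_pt hconv (by linarith : (0:ℝ) ≤ x₀ + ε)).eventually (eventually_gt_nhds hup)
    have hev2 : ∀ᶠ N in atTop, ∀ x ≤ x₀ - ε, gN N x < u := by
      rcases lt_or_ge (x₀ - ε) 0 with hneg | hpos
      · filter_upwards with N x hx
        rw [hgN_neg N x (lt_of_le_of_lt hx hneg)]
        exact hu0
      · have hlow : g (x₀ - ε) < u := hlt _ (by linarith)
        filter_upwards [(tlu_pt hconv hpos).eventually (eventually_lt_nhds hlow)]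
          with N hN x hx
        exact lt_of_le_of_lt ((gN N).mono hx) hN
    filter_upwards [hev1, hev2] with N h1 h2
    have hbd : BddBelow {x | u ≤ gN N x} := sinv_bddBelow (gN N) (hgN_neg N) hu0
    have hub : sinv (gN N) u ≤ x₀ + ε := csInf_le hbd h1.le
    have hlb : x₀ - ε ≤ sinv (gN N) u := by
      refine le_csInf ⟨x₀ + ε, h1.le⟩ (fun b hb => ?_)
      by_contra hc
      push_neg at hc
      exact absurd hb (not_le.2 (h2 b hc.le))
    rw [abs_le]
    constructor <;> linarith
  rw [Metric.tendsto_atTop]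
  intro ε hε
  obtain ⟨N₀, hN₀⟩ := (main (ε/2) (by linarith)).exists_forall_of_atTop
  exact ⟨N₀, fun n hn => by
    have := hN₀ n hn
    rw [Real.dist_eq]
    linarith⟩

end conv


/-- Portmanteau-type lemma (Lemma 5.2 of the paper): if the nondecreasing right-continuous
    gN converge locally uniformly on ℝ≥0 to a continuous nondecreasing g (all vanishing on
    negatives), and f is bounded measurable with discontinuity set of g-measure zero, then
    ∫_{[0,T]} f dgN → ∫_{[0,T]} f dg. -/
theorem stieltjes_portmanteau
    (gN : ℕ → StieltjesFunction ℝ) (g : StieltjesFunction ℝ)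
    (hgN_nonneg : ∀ N x, 0 ≤ gN N x)
    (hgN_neg : ∀ N x, x < 0 → gN N x = 0)
    (hg_cont : Continuous g) (hg_neg : ∀ x, x < 0 → g x = 0)
    (hconv : TendstoLocallyUniformlyOn (fun N x => gN N x) (fun x => g x)
      atTop (Set.Ici 0))
    (f : ℝ → ℝ) (hf_meas : Measurable f) (C : ℝ) (hf_bdd : ∀ x, |f x| ≤ C)
    (hf_disc : g.measure {x | ¬ ContinuousAt f x} = 0) :
    ∀ T, 0 < T →
      Tendsto (fun N => ∫ x in Set.Icc (0:ℝ) T, f x ∂(gN N).measure) atTop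
        (nhds (∫ x in Set.Icc (0:ℝ) T, f x ∂g.measure)) := by
  intro T hT
  set c : ℝ := g T with hc
  set cN : ℕ → ℝ := fun N => gN N T with hcNdef
  have hc0 : 0 ≤ c := h_nonneg g hg_neg T
  have hcN : Tendsto cN atTop (nhds c) := tlu_pt hconv hT.le
  have hC0 : 0 ≤ C := le_trans (abs_nonneg _) (hf_bdd 0)
  -- the two integral identities
  have key : ∀ (h : StieltjesFunction ℝ), (∀ x, x < 0 → h x = 0) →
      ∫ x in Icc (0:ℝ) T, f x ∂h.measure
        = ∫ u, (Ioc (0:ℝ) (h T)).indicator (fun u => f (sinv h u)) u := by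
    intro h h0
    have hmap := map_sinv h h0 T hT.le
    have h1 : ∫ x in Icc (0:ℝ) T, f x ∂h.measure
        = ∫ x, f x ∂(Measure.map (sinv h) (volume.restrict (Ioc 0 (h T)))) := by
      rw [hmap]
    rw [h1, integral_map (sinv_aemeasurable h h0 T) hf_meas.aestronglyMeasurable,
      ← integral_indicator measurableSet_Ioc]
  rw [key g hg_neg]
  -- discontinuity set
  have hDmeas : MeasurableSet {x : ℝ | ¬ ContinuousAt f x} := by
    have : {x : ℝ | ¬ ContinuousAt f x} = {x | ContinuousAt f x}ᶜ := rfl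
    rw [this]
    exact (IsGδ.setOf_continuousAt f).measurableSet.compl
  have hA : volume (sinv g ⁻¹' {x : ℝ | ¬ ContinuousAt f x} ∩ Ioc 0 c) = 0 := by
    have h1 : (volume.restrict (Ioc (0:ℝ) c)) (sinv g ⁻¹' {x : ℝ | ¬ ContinuousAt f x})
        = (g.measure.restrict (Icc 0 T)) {x : ℝ | ¬ ContinuousAt f x} := by
      rw [← Measure.map_apply_of_aemeasurable (sinv_aemeasurable g hg_neg T) hDmeas,
        map_sinv g hg_neg T hT.le]
    rw [Measure.restrict_apply' measurableSet_Ioc] at h1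
    rw [h1, Measure.restrict_apply' measurableSet_Icc]
    exact le_antisymm (le_trans (measure_mono Set.inter_subset_left) hf_disc.le) zero_le
  have hB : volume (Set.range (fun q : ℚ => g (q : ℝ))) = 0 :=
    (Set.countable_range _).measure_zero _
  -- a.e. convergence
  have hlim : ∀ᵐ u : ℝ,
      Tendsto (fun N => (Ioc (0:ℝ) (cN N)).indicator (fun u => f (sinv (gN N) u)) u) atTop
        (nhds ((Ioc (0:ℝ) c).indicator (fun u => f (sinv g u)) u)) := by
    have h1 : ∀ᵐ u : ℝ, u ∉ Set.range (fun q : ℚ => g (q : ℝ)) :=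
      measure_eq_zero_iff_ae_notMem.mp hB
    have h2 : ∀ᵐ u : ℝ, u ∉ ({c} : Set ℝ) :=
      measure_eq_zero_iff_ae_notMem.mp (measure_singleton c)
    have h3 : ∀ᵐ u : ℝ, u ∉ sinv g ⁻¹' {x : ℝ | ¬ ContinuousAt f x} ∩ Ioc 0 c :=
      measure_eq_zero_iff_ae_notMem.mp hA
    filter_upwards [h1, h2, h3] with u hu1 hu2 hu3
    rcases le_or_gt u 0 with hu | hu
    · have hz : ∀ N, (Ioc (0:ℝ) (cN N)).indicator (fun u => f (sinv (gN N) u)) u = 0 :=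
        fun N => Set.indicator_of_notMem (fun hmem => absurd hmem.1 (not_lt.2 hu)) _
      rw [Set.indicator_of_notMem (fun hmem => absurd hmem.1 (not_lt.2 hu))]
      exact tendsto_const_nhds.congr (fun N => (hz N).symm)
    · have hune : u ≠ c := fun h => hu2 (by simp [h])
      rcases lt_or_gt_of_ne hune with hlt | hgt
      · -- 0 < u < c
        have hfc : ContinuousAt f (sinv g u) := by
          by_contra hnc
          exact hu3 ⟨hnc, hu, hlt.le⟩
        have hx := sinv_tendsto gN g hgN_neg hg_cont hg_neg hconv hu hlt
          (fun q hq => hu1 ⟨q, hq⟩)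
        have hev : ∀ᶠ N in atTop, u ≤ cN N := hcN.eventually (eventually_ge_nhds hlt)
        rw [Set.indicator_of_mem (Set.mem_Ioc.mpr ⟨hu, hlt.le⟩) (fun v => f (sinv (g : ℝ → ℝ) v))]
        refine Tendsto.congr' ?_ (hfc.tendsto.comp hx)
        filter_upwards [hev] with N hN
        exact (Set.indicator_of_mem (Set.mem_Ioc.mpr ⟨hu, hN⟩) (fun v => f (sinv ((gN N : StieltjesFunction ℝ) : ℝ → ℝ) v))).symm
      · -- u > c
        rw [Set.indicator_of_notMem (fun hmem => absurd hmem.2 (not_le.2 hgt))]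
        have hev : ∀ᶠ N in atTop, cN N < u := hcN.eventually (eventually_lt_nhds hgt)
        refine Tendsto.congr' ?_ tendsto_const_nhds
        filter_upwards [hev] with N hN
        exact (Set.indicator_of_notMem (fun hmem => absurd hmem.2 (not_le.2 hN)) _).symm
  -- dominated convergence
  have hdom : Tendsto
      (fun N => ∫ u, (Ioc (0:ℝ) (cN N)).indicator (fun u => f (sinv (gN N) u)) u) atTop
      (nhds (∫ u, (Ioc (0:ℝ) c).indicator (fun u => f (sinv g u)) u)) := by
    refine tendsto_integral_filter_of_dominated_convergence
      ((Ioc (0:ℝ) (c+1)).indicator (fun _ => C)) ?_ ?_ ?_ hlim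
    · filter_upwards with N
      rw [aestronglyMeasurable_indicator_iff measurableSet_Ioc]
      exact (hf_meas.comp_aemeasurable
        (sinv_aemeasurable (gN N) (hgN_neg N) T)).aestronglyMeasurable
    · filter_upwards [hcN.eventually (eventually_lt_nhds (lt_add_one c))] with N hN
      filter_upwards with u
      rcases em (u ∈ Ioc (0:ℝ) (cN N)) with hmem | hmem
      · rw [Set.indicator_of_mem hmem, Set.indicator_of_mem
          (Set.mem_Ioc.mpr ⟨hmem.1, le_of_lt (lt_of_le_of_lt hmem.2 hN)⟩)]
        exact (Real.norm_eq_abs _) ▸ hf_bdd _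
      · rw [Set.indicator_of_notMem hmem, norm_zero]
        exact Set.indicator_nonneg (fun _ _ => hC0) u
    · rw [integrable_indicator_iff measurableSet_Ioc]
      exact integrableOn_const measure_Ioc_lt_top.ne
  exact hdom.congr (fun N => (key (gN N) (hgN_neg N)).symm)
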